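/- arXiv:2604.03444 — 2 statements merged into one kernel-verified Lean document; each statement's English description precedes it below -/
import Mathlib

section
/- Fix α > 0 and a < b, and set L_n = a + ((b-a)/(α·ζ(α+1)))·n^{-α}, L̃_n = a + ((b-a)/ζ(α+1))·∑_{k=n+1}^∞ k^{-(α+1)}. Then the relative error (L_n - L̃_n)/L̃_n is at most ((n+1)^α - n^α)/n^α, and in particular tends to 0 as n → ∞. -/
open Filter Real


/-- ζ(s) = ∑_{k=1}^∞ k^{-s}, as a real series. -/
noncomputable def zetaR (s : ℝ) : ℝ := ∑' k : ℕ, ((k : ℝ) + 1) ^ (-s)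

/-- Tail sum ∑_{k=n+1}^∞ k^{-(α+1)}. -/
noncomputable def tailSum (α : ℝ) (n : ℕ) : ℝ := ∑' k : ℕ, ((n : ℝ) + 1 + k) ^ (-(α + 1))

/-- Power-law approximation L_n = a + ((b-a)/(α·ζ(α+1)))·n^{-α}. -/
noncomputable def Lpow (α a b : ℝ) (n : ℕ) : ℝ :=
  a + (b - a) / (α * zetaR (α + 1)) * (n : ℝ) ^ (-α)

/-- Exact quantization-model loss L̃_n = a + ((b-a)/ζ(α+1))·∑_{k=n+1}^∞ k^{-(α+1)}. -/
noncomputable def Ltilde (α a b : ℝ) (n : ℕ) : ℝ :=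
  a + (b - a) / zetaR (α + 1) * tailSum α n


lemma aux_mvt (α : ℝ) (hα : 0 < α) {x : ℝ} (hx : 0 < x) :
    α * (x + 1) ^ (-(α + 1)) ≤ x ^ (-α) - (x + 1) ^ (-α) ∧
      x ^ (-α) - (x + 1) ^ (-α) ≤ α * x ^ (-(α + 1)) := by
  have he : -(α + 1) = -α - 1 := by ring
  rw [he]
  have hcont : ContinuousOn (fun y : ℝ => y ^ (-α)) (Set.Icc x (x + 1)) := by
    apply ContinuousOn.rpow_const continuousOn_id
    intro y hy
    exact Or.inl (ne_of_gt (lt_of_lt_of_le hx hy.1))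
  have hderiv : ∀ y ∈ Set.Ioo x (x + 1),
      HasDerivAt (fun y : ℝ => y ^ (-α)) (-α * y ^ (-α - 1)) y := by
    intro y hy
    exact Real.hasDerivAt_rpow_const (Or.inl (ne_of_gt (lt_trans hx hy.1)))
  obtain ⟨ξ, hξ, hd⟩ := exists_hasDerivAt_eq_slope (fun y : ℝ => y ^ (-α))
    (fun y => -α * y ^ (-α - 1)) (by linarith : x < x + 1) hcont hderiv
  have hξ0 : 0 < ξ := lt_trans hx hξ.1
  rw [show x + 1 - x = 1 by ring, div_one] at hd
  have h1 : (x + 1) ^ (-α - 1) ≤ ξ ^ (-α - 1) :=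
    Real.rpow_le_rpow_of_nonpos hξ0 hξ.2.le (by linarith)
  have h2 : ξ ^ (-α - 1) ≤ x ^ (-α - 1) :=
    Real.rpow_le_rpow_of_nonpos hx hξ.1.le (by linarith)
  constructor
  · nlinarith [mul_le_mul_of_nonneg_left h1 hα.le]
  · nlinarith [mul_le_mul_of_nonneg_left h2 hα.le]

lemma aux_tele (α : ℝ) (hα : 0 < α) {c : ℝ} (hc : 0 < c) :
    HasSum (fun k : ℕ => (c + k) ^ (-α) - (c + k + 1) ^ (-α)) (c ^ (-α)) := by
  have hnn : ∀ k : ℕ, 0 ≤ (c + k) ^ (-α) - (c + k + 1) ^ (-α) := by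
    intro k
    have h0 : (0:ℝ) < c + k := by positivity
    exact sub_nonneg.mpr (Real.rpow_le_rpow_of_nonpos h0 (by linarith) (by linarith))
  rw [hasSum_iff_tendsto_nat_of_nonneg hnn]
  have hsum : ∀ m : ℕ, ∑ k ∈ Finset.range m, ((c + k) ^ (-α) - (c + k + 1) ^ (-α))
      = c ^ (-α) - (c + m) ^ (-α) := by
    intro m
    have h := Finset.sum_range_sub' (fun i : ℕ => (c + i) ^ (-α)) m
    simp only [Nat.cast_zero, add_zero, Nat.cast_add, Nat.cast_one] at h
    rw [← h]
    exact Finset.sum_congr rfl fun k _ => by ring_nf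
  have h0 : Tendsto (fun m : ℕ => (c + (m : ℝ)) ^ (-α)) atTop (nhds 0) :=
    (tendsto_rpow_neg_atTop hα).comp
      (tendsto_atTop_add_const_left _ c tendsto_natCast_atTop_atTop)
  have := (tendsto_const_nhds (x := c ^ (-α)) (f := atTop)).sub h0
  rw [sub_zero] at this
  exact this.congr fun m => (hsum m).symm

lemma aux_tail (α : ℝ) (hα : 0 < α) {c : ℝ} (hc : 1 < c) :
    Summable (fun k : ℕ => (c + k) ^ (-(α + 1))) ∧
      (∑' k : ℕ, (c + k) ^ (-(α + 1))) ≤ (c - 1) ^ (-α) / α ∧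
      c ^ (-α) / α ≤ ∑' k : ℕ, (c + k) ^ (-(α + 1)) := by
  have hc0 : 0 < c := by linarith
  have hd0 : 0 < c - 1 := by linarith
  -- upper telescoping
  have htu : HasSum (fun k : ℕ => (1/α) * ((c - 1 + k) ^ (-α) - (c - 1 + k + 1) ^ (-α)))
      ((1/α) * (c - 1) ^ (-α)) := (aux_tele α hα hd0).mul_left _
  have htl : HasSum (fun k : ℕ => (1/α) * ((c + k) ^ (-α) - (c + k + 1) ^ (-α)))
      ((1/α) * c ^ (-α)) := (aux_tele α hα hc0).mul_left _
  have hub : ∀ k : ℕ, (c + k) ^ (-(α + 1)) ≤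
      (1/α) * ((c - 1 + k) ^ (-α) - (c - 1 + k + 1) ^ (-α)) := by
    intro k
    have hx : (0:ℝ) < c - 1 + k := by positivity
    have h := (aux_mvt α hα hx).1
    rw [show c - 1 + k + 1 = c + k by ring] at h ⊢
    rw [one_div, inv_mul_eq_div, le_div_iff₀ hα]
    linarith
  have hlb : ∀ k : ℕ, (1/α) * ((c + k) ^ (-α) - (c + k + 1) ^ (-α)) ≤
      (c + k) ^ (-(α + 1)) := by
    intro k
    have hx : (0:ℝ) < c + k := by positivity
    have h := (aux_mvt α hα hx).2
    rw [one_div, inv_mul_eq_div, div_le_iff₀ hα]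
    linarith
  have hnn : ∀ k : ℕ, 0 ≤ (c + k) ^ (-(α + 1)) := by
    intro k; positivity
  have hsummable : Summable (fun k : ℕ => (c + k) ^ (-(α + 1))) :=
    Summable.of_nonneg_of_le hnn hub htu.summable
  refine ⟨hsummable, ?_, ?_⟩
  · have := Summable.tsum_le_tsum hub hsummable htu.summable
    rw [htu.tsum_eq] at this
    calc (∑' k : ℕ, (c + k) ^ (-(α + 1))) ≤ (1/α) * (c-1) ^ (-α) := this
      _ = (c - 1) ^ (-α) / α := by ring
  · have := Summable.tsum_le_tsum hlb htl.summable hsummable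
    rw [htl.tsum_eq] at this
    calc c ^ (-α) / α = (1/α) * c ^ (-α) := by ring
      _ ≤ _ := this

lemma zetaR_pos (α : ℝ) (hα : 0 < α) : 0 < zetaR (α + 1) := by
  have hs0 : Summable (fun n : ℕ => (n : ℝ) ^ (-(α + 1))) :=
    Real.summable_nat_rpow.mpr (by linarith)
  have hs : Summable (fun k : ℕ => ((k : ℝ) + 1) ^ (-(α + 1))) := by
    have := (summable_nat_add_iff 1).mpr hs0
    refine this.congr fun k => ?_
    push_cast
    ring_nf
  have := Summable.tsum_pos hs (fun k => by positivity) 0 (by norm_num)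
  simpa [zetaR] using this

/-- The relative error (L_n - L̃_n)/L̃_n is at most ((n+1)^α - n^α)/n^α, and in
particular tends to 0 as n → ∞. -/
theorem stmt7 (α a b : ℝ) (hα : 0 < α) (ha : 0 < a) (hab : a < b) :
    (∀ n : ℕ, 1 ≤ n →
      (Lpow α a b n - Ltilde α a b n) / Ltilde α a b n ≤
        (((n : ℝ) + 1) ^ α - (n : ℝ) ^ α) / (n : ℝ) ^ α) ∧
    Filter.Tendsto (fun n : ℕ => (Lpow α a b n - Ltilde α a b n) / Ltilde α a b n)
      Filter.atTop (nhds 0) := by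
  have hζ : 0 < zetaR (α + 1) := zetaR_pos α hα
  have hba : 0 < b - a := by linarith
  have hC : 0 < (b - a) / zetaR (α + 1) := div_pos hba hζ
  -- basic facts for n ≥ 1
  have hfacts : ∀ n : ℕ, 1 ≤ n →
      tailSum α n ≤ (n : ℝ) ^ (-α) / α ∧
      ((n : ℝ) + 1) ^ (-α) / α ≤ tailSum α n := by
    intro n hn
    have hx : (1:ℝ) ≤ (n : ℝ) := by exact_mod_cast hn
    have hc : (1:ℝ) < (n : ℝ) + 1 := by linarith
    obtain ⟨_, hup, hlo⟩ := aux_tail α hα hc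
    have hT : tailSum α n = ∑' k : ℕ, ((n : ℝ) + 1 + k) ^ (-(α + 1)) := rfl
    constructor
    · rw [hT]
      calc (∑' k : ℕ, ((n : ℝ) + 1 + k) ^ (-(α + 1)))
          ≤ ((n : ℝ) + 1 - 1) ^ (-α) / α := hup
        _ = (n : ℝ) ^ (-α) / α := by norm_num
    · rw [hT]; exact hlo
  -- positivity of Ltilde and the key product inequality
  have hLt : ∀ n : ℕ, 1 ≤ n → 0 < Ltilde α a b n := by
    intro n hn
    obtain ⟨_, hlo⟩ := hfacts n hn
    have h0 : (0:ℝ) < ((n : ℝ) + 1) ^ (-α) / α := by positivity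
    have : 0 ≤ (b - a) / zetaR (α + 1) * tailSum α n :=
      mul_nonneg hC.le (le_trans h0.le hlo)
    unfold Ltilde; linarith
  have hkey : ∀ n : ℕ, 1 ≤ n →
      Lpow α a b n * (n : ℝ) ^ α ≤ Ltilde α a b n * ((n : ℝ) + 1) ^ α := by
    intro n hn
    obtain ⟨_, hlo⟩ := hfacts n hn
    have hx : (1:ℝ) ≤ (n : ℝ) := by exact_mod_cast hn
    have hx0 : (0:ℝ) < (n : ℝ) := by linarith
    have hx1 : (0:ℝ) < (n : ℝ) + 1 := by linarith
    have hp1 : (n : ℝ) ^ (-α) * (n : ℝ) ^ α = 1 := by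
      rw [← Real.rpow_add hx0]; simp
    have hp2 : ((n : ℝ) + 1) ^ (-α) * ((n : ℝ) + 1) ^ α = 1 := by
      rw [← Real.rpow_add hx1]; simp
    have hQ : (0:ℝ) < ((n : ℝ) + 1) ^ α := Real.rpow_pos_of_pos hx1 α
    have hPQ : (n : ℝ) ^ α ≤ ((n : ℝ) + 1) ^ α :=
      Real.rpow_le_rpow hx0.le (by linarith) hα.le
    have hdd : (b - a) / (α * zetaR (α + 1)) = (b - a) / zetaR (α + 1) / α := by
      rw [div_div, mul_comm]
    unfold Lpow Ltilde
    rw [hdd]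
    have h1 : (a + (b - a) / zetaR (α + 1) / α * (n : ℝ) ^ (-α)) * (n : ℝ) ^ α
        = a * (n : ℝ) ^ α + (b - a) / zetaR (α + 1) / α := by
      have : (b - a) / zetaR (α + 1) / α * (n : ℝ) ^ (-α) * (n : ℝ) ^ α
          = (b - a) / zetaR (α + 1) / α := by
        rw [mul_assoc, hp1, mul_one]
      linarith [this]
    rw [h1]
    have h2 : a * ((n : ℝ) + 1) ^ α + (b - a) / zetaR (α + 1) / α
        ≤ (a + (b - a) / zetaR (α + 1) * tailSum α n) * ((n : ℝ) + 1) ^ α := by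
      have hs : (b - a) / zetaR (α + 1) * (((n : ℝ) + 1) ^ (-α) / α)
          ≤ (b - a) / zetaR (α + 1) * tailSum α n :=
        mul_le_mul_of_nonneg_left hlo hC.le
      have he : (b - a) / zetaR (α + 1) * (((n : ℝ) + 1) ^ (-α) / α) * ((n : ℝ) + 1) ^ α
          = (b - a) / zetaR (α + 1) / α := by
        field_simp
        nlinarith [hp2]
      nlinarith [mul_le_mul_of_nonneg_right hs hQ.le, he]
    nlinarith [mul_le_mul_of_nonneg_left hPQ ha.le]
  -- part 1
  have part1 : ∀ n : ℕ, 1 ≤ n →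
      (Lpow α a b n - Ltilde α a b n) / Ltilde α a b n ≤
        (((n : ℝ) + 1) ^ α - (n : ℝ) ^ α) / (n : ℝ) ^ α := by
    intro n hn
    have hx0 : (0:ℝ) < (n : ℝ) := by exact_mod_cast Nat.pos_of_ne_zero (by omega)
    have hP : (0:ℝ) < (n : ℝ) ^ α := Real.rpow_pos_of_pos hx0 α
    rw [div_le_div_iff₀ (hLt n hn) hP]
    nlinarith [hkey n hn]
  refine ⟨part1, ?_⟩
  -- numerator nonneg for n ≥ 1
  have hnum : ∀ n : ℕ, 1 ≤ n → 0 ≤ Lpow α a b n - Ltilde α a b n := by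
    intro n hn
    obtain ⟨hup, _⟩ := hfacts n hn
    have hs : (b - a) / zetaR (α + 1) * tailSum α n
        ≤ (b - a) / zetaR (α + 1) * ((n : ℝ) ^ (-α) / α) :=
      mul_le_mul_of_nonneg_left hup hC.le
    have he : (b - a) / zetaR (α + 1) * ((n : ℝ) ^ (-α) / α)
        = (b - a) / (α * zetaR (α + 1)) * (n : ℝ) ^ (-α) := by
      field_simp
    unfold Lpow Ltilde
    linarith [hs, he]
  -- upper bound tends to 0
  have h1n : Filter.Tendsto (fun n : ℕ => 1 + ((n : ℝ))⁻¹) Filter.atTop (nhds 1) := by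
    have := tendsto_const_nhds (x := (1:ℝ)) (f := Filter.atTop (α := ℕ)) |>.add
      (tendsto_inv_atTop_zero.comp tendsto_natCast_atTop_atTop)
    simpa using this
  have hcont : ContinuousAt (fun y : ℝ => y ^ α) 1 :=
    Real.continuousAt_rpow_const 1 α (Or.inl one_ne_zero)
  have hub0 : Filter.Tendsto (fun n : ℕ => (1 + ((n : ℝ))⁻¹) ^ α - 1)
      Filter.atTop (nhds 0) := by
    have := (hcont.tendsto.comp h1n).sub
      (tendsto_const_nhds (x := (1:ℝ)) (f := Filter.atTop (α := ℕ)))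
    simpa [Real.one_rpow, Function.comp] using this
  have heq : ∀ᶠ n : ℕ in Filter.atTop,
      (1 + ((n : ℝ))⁻¹) ^ α - 1 = (((n : ℝ) + 1) ^ α - (n : ℝ) ^ α) / (n : ℝ) ^ α := by
    filter_upwards [Filter.eventually_ge_atTop 1] with n hn
    have hx0 : (0:ℝ) < (n : ℝ) := by exact_mod_cast Nat.pos_of_ne_zero (by omega)
    have hP : (0:ℝ) < (n : ℝ) ^ α := Real.rpow_pos_of_pos hx0 α
    have h1 : (1 : ℝ) + ((n : ℝ))⁻¹ = ((n : ℝ) + 1) / (n : ℝ) := by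
      field_simp
    rw [h1, Real.div_rpow (by linarith) hx0.le, sub_div, div_self hP.ne']
  have hub : Filter.Tendsto (fun n : ℕ => (((n : ℝ) + 1) ^ α - (n : ℝ) ^ α) / (n : ℝ) ^ α)
      Filter.atTop (nhds 0) := hub0.congr' heq
  refine tendsto_of_tendsto_of_tendsto_of_le_of_le' tendsto_const_nhds hub ?_ ?_
  · filter_upwards [Filter.eventually_ge_atTop 1] with n hn
    exact div_nonneg (hnum n hn) (hLt n hn).le
  · filter_upwards [Filter.eventually_ge_atTop 1] with n hn
    exact part1 n hn
end

section
/- Fix A, B, α, β > 0 and a compute constraint C = 6·N·D. The allocation minimizing A/N^α + B/D^β subject to 6ND = C satisfies the first-order condition α·A/N^α = β·B/D^β, and the compute-optimal model size is N* = (C/(6G))^{β/(α+β)} where G = (βB/(αA))^{1/β}. -/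
open Real

/-- The weighted geometric mean term depends only on the product N*D. -/
lemma chinch_prod_eq (A B α β : ℝ) (hA : 0 < A) (hB : 0 < B) (hα : 0 < α)
    (hβ : 0 < β) {N D : ℝ} (hN : 0 < N) (hD : 0 < D) :
    ((α + β) * A / (β * N ^ α)) ^ (β / (α + β)) *
      ((α + β) * B / (α * D ^ β)) ^ (α / (α + β)) =
    ((α + β) * A / β) ^ (β / (α + β)) * ((α + β) * B / α) ^ (α / (α + β)) /
      (N * D) ^ (α * β / (α + β)) := by
  have hNα : 0 < N ^ α := rpow_pos_of_pos hN α
  have hDβ : 0 < D ^ β := rpow_pos_of_pos hD β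
  have h1 : ((α + β) * A / (β * N ^ α)) = ((α + β) * A / β) / N ^ α := by
    field_simp
  have h2 : ((α + β) * B / (α * D ^ β)) = ((α + β) * B / α) / D ^ β := by
    field_simp
  rw [h1, h2, Real.div_rpow (by positivity) hNα.le, Real.div_rpow (by positivity) hDβ.le]
  have e1 : (N ^ α) ^ (β / (α + β)) = N ^ (α * β / (α + β)) := by
    rw [← Real.rpow_mul hN.le]; congr 1; ring
  have e2 : (D ^ β) ^ (α / (α + β)) = D ^ (α * β / (α + β)) := by
    rw [← Real.rpow_mul hD.le]; congr 1; ring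
  rw [e1, e2, Real.mul_rpow hN.le hD.le]
  have p1 : (0:ℝ) < N ^ (α * β / (α + β)) := rpow_pos_of_pos hN _
  have p2 : (0:ℝ) < D ^ (α * β / (α + β)) := rpow_pos_of_pos hD _
  field_simp

/-- Weighted AM-GM lower bound for the loss. -/
lemma chinch_amgm (A B α β : ℝ) (hA : 0 < A) (hB : 0 < B) (hα : 0 < α)
    (hβ : 0 < β) {N D : ℝ} (hN : 0 < N) (hD : 0 < D) :
    ((α + β) * A / (β * N ^ α)) ^ (β / (α + β)) *
      ((α + β) * B / (α * D ^ β)) ^ (α / (α + β)) ≤ A / N ^ α + B / D ^ β := by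
  have hs : 0 < α + β := by linarith
  have hNα : 0 < N ^ α := rpow_pos_of_pos hN α
  have hDβ : 0 < D ^ β := rpow_pos_of_pos hD β
  have key := Real.geom_mean_le_arith_mean2_weighted
    (w₁ := β / (α + β)) (w₂ := α / (α + β))
    (p₁ := (α + β) * A / (β * N ^ α)) (p₂ := (α + β) * B / (α * D ^ β))
    (by positivity) (by positivity) (by positivity) (by positivity)
    (by field_simp; ring)
  have e1 : β / (α + β) * ((α + β) * A / (β * N ^ α)) = A / N ^ α := by
    field_simp
  have e2 : α / (α + β) * ((α + β) * B / (α * D ^ β)) = B / D ^ β := by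
    field_simp
  rw [e1, e2] at key
  exact key

/-- Compute-optimal allocation for the Chinchilla law under the constraint 6ND = C:
with G = (βB/(αA))^{1/β} and N* = (C/(6G))^{β/(α+β)}, D* = C/(6N*), the pair
(N*, D*) satisfies the constraint, the first-order condition αA/N^α = βB/D^β, and
minimizes A/N^α + B/D^β among all positive allocations with 6ND = C. -/
theorem stmt15 (A B α β C : ℝ) (hA : 0 < A) (hB : 0 < B) (hα : 0 < α)
    (hβ : 0 < β) (hC : 0 < C) :
    let G := (β * B / (α * A)) ^ (1 / β)
    let Nstar := (C / (6 * G)) ^ (β / (α + β))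
    let Dstar := C / (6 * Nstar)
    0 < Nstar ∧ 0 < Dstar ∧ 6 * Nstar * Dstar = C ∧
      α * A / Nstar ^ α = β * B / Dstar ^ β ∧
      ∀ N D : ℝ, 0 < N → 0 < D → 6 * N * D = C →
        A / Nstar ^ α + B / Dstar ^ β ≤ A / N ^ α + B / D ^ β := by
  intro G Nstar Dstar
  have hs : 0 < α + β := by linarith
  have hG : 0 < G := rpow_pos_of_pos (by positivity) _
  have hx : 0 < C / (6 * G) := by positivity
  set x : ℝ := C / (6 * G) with hxdef
  have hN : 0 < Nstar := rpow_pos_of_pos hx _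
  have hD : 0 < Dstar := by
    show 0 < C / (6 * Nstar); positivity
  have hcon : 6 * Nstar * Dstar = C := by
    show 6 * Nstar * (C / (6 * Nstar)) = C
    field_simp
  -- Dstar in closed form
  have hxsum : x ^ (α / (α + β)) * x ^ (β / (α + β)) = x := by
    rw [← Real.rpow_add hx, show α / (α + β) + β / (α + β) = 1 by field_simp,
      Real.rpow_one]
  have hC6 : C = 6 * G * x := by
    rw [hxdef]; field_simp
  have hDs : Dstar = G * x ^ (α / (α + β)) := by
    show C / (6 * Nstar) = G * x ^ (α / (α + β))
    rw [div_eq_iff (by positivity), hC6]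
    show 6 * G * x = G * x ^ (α / (α + β)) * (6 * x ^ (β / (α + β)))
    linear_combination 6 * G * hxsum.symm
  have hGβ : G ^ β = β * B / (α * A) := by
    show ((β * B / (α * A)) ^ (1 / β)) ^ β = β * B / (α * A)
    rw [← Real.rpow_mul (by positivity), one_div, inv_mul_cancel₀ hβ.ne',
      Real.rpow_one]
  have hNα : Nstar ^ α = x ^ (α * β / (α + β)) := by
    show (x ^ (β / (α + β))) ^ α = x ^ (α * β / (α + β))
    rw [← Real.rpow_mul hx.le]; congr 1; ring
  have hDβ : Dstar ^ β = (β * B / (α * A)) * x ^ (α * β / (α + β)) := by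
    rw [hDs, Real.mul_rpow hG.le (by positivity), hGβ, ← Real.rpow_mul hx.le]
    congr 2; ring
  have hxe : 0 < x ^ (α * β / (α + β)) := rpow_pos_of_pos hx _
  have hNαpos : 0 < Nstar ^ α := rpow_pos_of_pos hN _
  have hDβpos : 0 < Dstar ^ β := rpow_pos_of_pos hD _
  have hFOC : α * A / Nstar ^ α = β * B / Dstar ^ β := by
    rw [div_eq_div_iff hNαpos.ne' hDβpos.ne', hNα, hDβ]
    field_simp
  refine ⟨hN, hD, hcon, hFOC, ?_⟩
  intro N D hNp hDp hND
  -- the common value p at the optimum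
  set p : ℝ := (α + β) * A / (β * Nstar ^ α) with hpdef
  have hp : 0 < p := by positivity
  have hp2 : (α + β) * B / (α * Dstar ^ β) = p := by
    rw [hpdef]
    rw [div_eq_div_iff (by positivity) (by positivity)]
    have : α * A * Dstar ^ β = β * B * Nstar ^ α := by
      have := hFOC
      rw [div_eq_div_iff hNαpos.ne' hDβpos.ne'] at this
      linarith
    nlinarith [this]
  -- value at star equals p
  have hval : A / Nstar ^ α + B / Dstar ^ β = p := by
    have e1 : A / Nstar ^ α = β / (α + β) * p := by
      rw [hpdef]; field_simp
    have e2 : B / Dstar ^ β = α / (α + β) * p := by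
      rw [← hp2]; field_simp
    rw [e1, e2]; field_simp; ring
  -- product at star equals p
  have hprodstar : ((α + β) * A / (β * Nstar ^ α)) ^ (β / (α + β)) *
      ((α + β) * B / (α * Dstar ^ β)) ^ (α / (α + β)) = p := by
    rw [hp2, ← hpdef, ← Real.rpow_add hp,
      show β / (α + β) + α / (α + β) = 1 by field_simp; ring, Real.rpow_one]
  have hprodeq : Nstar * Dstar = N * D := by
    have : 6 * (Nstar * Dstar) = 6 * (N * D) := by linarith [hcon, hND]
    linarith
  calc A / Nstar ^ α + B / Dstar ^ β
      = ((α + β) * A / (β * Nstar ^ α)) ^ (β / (α + β)) *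
        ((α + β) * B / (α * Dstar ^ β)) ^ (α / (α + β)) := by
        rw [hprodstar, hval]
    _ = ((α + β) * A / β) ^ (β / (α + β)) * ((α + β) * B / α) ^ (α / (α + β)) /
        (Nstar * Dstar) ^ (α * β / (α + β)) :=
        chinch_prod_eq A B α β hA hB hα hβ hN hD
    _ = ((α + β) * A / β) ^ (β / (α + β)) * ((α + β) * B / α) ^ (α / (α + β)) /
        (N * D) ^ (α * β / (α + β)) := by rw [hprodeq]
    _ = ((α + β) * A / (β * N ^ α)) ^ (β / (α + β)) *
        ((α + β) * B / (α * D ^ β)) ^ (α / (α + β)) :=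
        (chinch_prod_eq A B α β hA hB hα hβ hNp hDp).symm
    _ ≤ A / N ^ α + B / D ^ β := chinch_amgm A B α β hA hB hα hβ hNp hDp
end
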